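/- arXiv:1211.1724 — 4 statements merged into one kernel-verified Lean document; each statement's English description precedes it below -/
import Mathlib

section
/- For unit vectors u, v ∈ ℂ^N, the maximum over all choices of u, v of min_{1≤n≤N} Re(\overline{u_n} v_n) equals 1/N, attained when u_n = v_n = 1/√N for all n. -/
open scoped ComplexConjugate

theorem stmt6 (N : ℕ) (hN : 0 < N) :
    IsGreatest
      {m : ℝ | ∃ u v : Fin N → ℂ,
        (∑ n, ‖u n‖ ^ 2 = 1) ∧ (∑ n, ‖v n‖ ^ 2 = 1) ∧
        m = ⨅ n, (conj (u n) * v n).re}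
      (1 / N) ∧
    (⨅ n : Fin N,
        (conj ((fun _ : Fin N => ((1 / Real.sqrt N : ℝ) : ℂ)) n) *
          ((fun _ : Fin N => ((1 / Real.sqrt N : ℝ) : ℂ)) n)).re) = 1 / N := by
  haveI : Nonempty (Fin N) := Fin.pos_iff_nonempty.mp hN
  have hNR : (0:ℝ) < N := by exact_mod_cast hN
  have hsq : (1 / Real.sqrt N : ℝ) * (1 / Real.sqrt N) = 1 / N := by
    rw [div_mul_div_comm, one_mul, Real.mul_self_sqrt hNR.le]
  have hinf : (⨅ n : Fin N,
        (conj ((fun _ : Fin N => ((1 / Real.sqrt N : ℝ) : ℂ)) n) *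
          ((fun _ : Fin N => ((1 / Real.sqrt N : ℝ) : ℂ)) n)).re) = 1 / N := by
    rw [show (fun n : Fin N => (conj ((fun _ : Fin N => ((1 / Real.sqrt N : ℝ) : ℂ)) n) *
          ((fun _ : Fin N => ((1 / Real.sqrt N : ℝ) : ℂ)) n)).re)
        = fun _ : Fin N => (1 : ℝ) / N from funext fun n => by
          rw [show ((fun _ : Fin N => ((1 / Real.sqrt N : ℝ) : ℂ)) n) = ((1 / Real.sqrt N : ℝ) : ℂ) from rfl,
            Complex.conj_ofReal, ← Complex.ofReal_mul, Complex.ofReal_re, hsq]]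
    exact ciInf_const
  refine ⟨⟨?_, ?_⟩, hinf⟩
  · -- membership
    refine ⟨fun _ => ((1 / Real.sqrt N : ℝ) : ℂ), fun _ => ((1 / Real.sqrt N : ℝ) : ℂ), ?_, ?_, hinf.symm⟩
    all_goals
      simp only [Complex.norm_real, Real.norm_eq_abs, Finset.sum_const, Finset.card_univ, Fintype.card_fin,
        nsmul_eq_mul]
      rw [abs_of_nonneg (by positivity), sq, hsq]
      field_simp
  · -- upper bound
    rintro m ⟨u, v, hu, hv, rfl⟩
    have hb : BddBelow (Set.range fun n => (conj (u n) * v n).re) :=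
      (Set.finite_range _).bddBelow
    have h2 : (N:ℝ) * (⨅ n, (conj (u n) * v n).re) ≤ ∑ n, (conj (u n) * v n).re := by
      calc (N:ℝ) * (⨅ n, (conj (u n) * v n).re)
          = ∑ _n : Fin N, (⨅ n, (conj (u n) * v n).re) := by
            simp [Finset.sum_const, mul_comm]
        _ ≤ ∑ n, (conj (u n) * v n).re :=
            Finset.sum_le_sum fun n _ => ciInf_le hb n
    have h3 : ∑ n, (conj (u n) * v n).re ≤ 1 := by
      have hle : ∀ n, (conj (u n) * v n).re ≤
          (‖u n‖ ^ 2 + ‖v n‖ ^ 2) / 2 := by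
        intro n
        calc (conj (u n) * v n).re ≤ ‖conj (u n) * v n‖ := Complex.re_le_norm _
          _ = ‖u n‖ * ‖v n‖ := by
              rw [norm_mul, Complex.norm_conj]
          _ ≤ (‖u n‖ ^ 2 + ‖v n‖ ^ 2) / 2 := by
              nlinarith [sq_nonneg (‖u n‖ - ‖v n‖)]
      calc ∑ n, (conj (u n) * v n).re
          ≤ ∑ n, (‖u n‖ ^ 2 + ‖v n‖ ^ 2) / 2 :=
            Finset.sum_le_sum fun n _ => hle n
        _ = 1 := by rw [← Finset.sum_div, Finset.sum_add_distrib, hu, hv]; norm_num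
    rw [le_div_iff₀ hNR]
    linarith [h2.trans h3]
end

section
/- The speedup factor s(N) = 2·arccos(1/√N) / arccos(1/N), defined for real N ≥ 2, is strictly monotonically increasing in N. -/
open Real Set

noncomputable def Afun (t : ℝ) : ℝ := arccos (cos t ^ 2)
noncomputable def Hfun (t : ℝ) : ℝ := 2 * t / Afun t
noncomputable def Gfun (t : ℝ) : ℝ := Afun t - 2 * t * cos t / Real.sqrt (1 + cos t ^ 2)

lemma basicIoo {t : ℝ} (ht : t ∈ Ioo (π/4) (π/2)) :
    0 < cos t ∧ 0 < sin t ∧ cos t ^ 2 < 1 := by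
  obtain ⟨h1, h2⟩ := ht
  have hpi : (0:ℝ) < π/4 := by positivity
  have hc : 0 < cos t := Real.cos_pos_of_mem_Ioo ⟨by linarith [Real.pi_pos], h2⟩
  have hs : 0 < sin t := Real.sin_pos_of_pos_of_lt_pi (by linarith) (by linarith [Real.pi_pos])
  exact ⟨hc, hs, by nlinarith [Real.sin_sq_add_cos_sq t]⟩

lemma hA {t : ℝ} (ht : t ∈ Ioo (π/4) (π/2)) :
    HasDerivAt Afun (2 * cos t / Real.sqrt (1 + cos t ^ 2)) t := by
  obtain ⟨hc, hs, hx1⟩ := basicIoo ht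
  have hx0 : (0:ℝ) < cos t ^ 2 := by positivity
  have h₁ : cos t ^ 2 ≠ -1 := by nlinarith
  have h₂ : cos t ^ 2 ≠ 1 := by nlinarith
  have hd : HasDerivAt (fun t => arccos (cos t ^ 2))
      (-(1 / Real.sqrt (1 - (cos t ^ 2) ^ 2)) * (2 * cos t ^ 1 * (-sin t))) t :=
    (Real.hasDerivAt_arccos h₁ h₂).comp (h₂ := Real.arccos) t ((Real.hasDerivAt_cos t).fun_pow 2)
  unfold Afun
  convert hd using 1
  have hfac : 1 - (cos t ^ 2) ^ 2 = sin t ^ 2 * (1 + cos t ^ 2) := by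
    have := Real.sin_sq_add_cos_sq t
    nlinarith
  rw [hfac, Real.sqrt_mul (by positivity), Real.sqrt_sq hs.le]
  have h1c : (0:ℝ) < Real.sqrt (1 + cos t ^ 2) := Real.sqrt_pos.2 (by positivity)
  field_simp

lemma hG {t : ℝ} (ht : t ∈ Ioo (π/4) (π/2)) :
    HasDerivAt Gfun (2 * t * sin t / (Real.sqrt (1 + cos t ^ 2)) ^ 3) t := by
  obtain ⟨hc, hs, hx1⟩ := basicIoo ht
  have h1c : (0:ℝ) < Real.sqrt (1 + cos t ^ 2) := Real.sqrt_pos.2 (by positivity)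
  have hr2 : (Real.sqrt (1 + cos t ^ 2)) ^ 2 = 1 + cos t ^ 2 := Real.sq_sqrt (by positivity)
  have hu : HasDerivAt (fun t : ℝ => 2 * t * cos t) (2 * cos t + 2 * t * (-sin t)) t := by
    have := ((hasDerivAt_id t).const_mul (2:ℝ)).fun_mul (Real.hasDerivAt_cos t)
    simpa [mul_comm, mul_assoc, mul_left_comm] using this
  have hinner : HasDerivAt (fun t : ℝ => 1 + cos t ^ 2) (2 * cos t ^ 1 * (-sin t)) t :=
    ((Real.hasDerivAt_cos t).pow 2).const_add 1
  have hv : HasDerivAt (fun t : ℝ => Real.sqrt (1 + cos t ^ 2))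
      (1 / (2 * Real.sqrt (1 + cos t ^ 2)) * (2 * cos t ^ 1 * (-sin t))) t :=
    (Real.hasDerivAt_sqrt (by positivity)).comp t hinner
  have hB := (hA ht).fun_sub ((hu.fun_div hv (ne_of_gt h1c)))
  unfold Gfun
  refine hB.congr_deriv ?_
  symm
  field_simp
  linear_combination (-(t*Real.sin t)) * hr2

lemma Gcont : Continuous Gfun := by
  have h : ∀ t : ℝ, Real.sqrt (1 + cos t ^ 2) ≠ 0 := fun t =>
    ne_of_gt (Real.sqrt_pos.2 (by positivity))
  unfold Gfun Afun
  exact (Real.continuous_arccos.comp (Real.continuous_cos.pow 2)).sub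
    ((by continuity : Continuous fun t : ℝ => 2 * t * cos t).div
      (Real.continuous_sqrt.comp (by continuity)) h)

lemma Gmono : StrictMonoOn Gfun (Ico (π/4) (π/2)) := by
  apply strictMonoOn_of_deriv_pos (convex_Ico _ _) Gcont.continuousOn
  intro t ht
  rw [interior_Ico] at ht
  rw [(hG ht).deriv]
  obtain ⟨hc, hs, _⟩ := basicIoo ht
  have h1c : (0:ℝ) < Real.sqrt (1 + cos t ^ 2) := Real.sqrt_pos.2 (by positivity)
  have ht0 : 0 < t := lt_trans (by positivity) ht.1
  positivity

lemma Gpos_start : 0 < Gfun (π/4) := by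
  have hcos : cos (π/4) = Real.sqrt 2 / 2 := Real.cos_pi_div_four
  have h2 : (Real.sqrt 2) ^ 2 = 2 := Real.sq_sqrt (by norm_num)
  have hcsq : cos (π/4) ^ 2 = 1/2 := by rw [hcos]; rw [div_pow, h2]; norm_num
  have hA4 : Afun (π/4) = π/3 := by
    unfold Afun
    rw [hcsq, (show (1:ℝ)/2 = cos (π/3) from Real.cos_pi_div_three.symm),
      Real.arccos_cos (by positivity) (by linarith [Real.pi_pos])]
  unfold Gfun
  rw [hA4, hcsq, hcos]
  have hb : (0:ℝ) < Real.sqrt (1 + 1/2) := Real.sqrt_pos.2 (by norm_num)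
  have hb2 : (Real.sqrt (1 + 1/2)) ^ 2 = 3/2 := by
    rw [Real.sq_sqrt (by norm_num : (0:ℝ) ≤ 1 + 1/2)]; norm_num
  have ha : (0:ℝ) ≤ Real.sqrt 2 := Real.sqrt_nonneg 2
  rw [sub_pos, div_lt_iff₀ hb]
  have key : 3 * Real.sqrt 2 < 4 * Real.sqrt (1 + 1/2) := by nlinarith
  have hpi := Real.pi_pos
  nlinarith

lemma Gpos {t : ℝ} (ht : t ∈ Ico (π/4) (π/2)) : 0 < Gfun t := by
  rcases eq_or_lt_of_le ht.1 with h | h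
  · rw [← h]; exact Gpos_start
  · have := Gmono (left_mem_Ico.2 (by linarith [ht.2])) ht h
    linarith [Gpos_start]

lemma Apos {t : ℝ} (ht : t ∈ Ico (π/4) (π/2)) : 0 < Afun t := by
  have hpi : (0:ℝ) < π/4 := by positivity
  have hs : 0 < sin t := Real.sin_pos_of_pos_of_lt_pi (by linarith [ht.1])
    (by linarith [ht.2, Real.pi_pos])
  exact Real.arccos_pos.2 (by nlinarith [Real.sin_sq_add_cos_sq t])

lemma Acont : Continuous Afun := Real.continuous_arccos.comp (Real.continuous_cos.pow 2)

lemma Hmono : StrictMonoOn Hfun (Ico (π/4) (π/2)) := by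
  apply strictMonoOn_of_deriv_pos (convex_Ico _ _)
  · exact ContinuousOn.div (by fun_prop) Acont.continuousOn (fun t ht => ne_of_gt (Apos ht))
  · intro t ht
    rw [interior_Ico] at ht
    have hIco : t ∈ Ico (π/4) (π/2) := ⟨ht.1.le, ht.2⟩
    have hu : HasDerivAt (fun t : ℝ => 2 * t) 2 t := by
      simpa using (hasDerivAt_id t).const_mul (2:ℝ)
    have hd : HasDerivAt Hfun
        ((2 * Afun t - 2 * t * (2 * cos t / Real.sqrt (1 + cos t ^ 2))) / (Afun t) ^ 2) t :=
      hu.div (hA ht) (ne_of_gt (Apos hIco))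
    rw [hd.deriv]
    apply div_pos _ (pow_pos (Apos hIco) 2)
    · have hGt := Gpos hIco
      unfold Gfun at hGt
      have : 2 * Afun t - 2 * t * (2 * cos t / Real.sqrt (1 + cos t ^ 2))
          = 2 * (Afun t - 2 * t * cos t / Real.sqrt (1 + cos t ^ 2)) := by ring
      rw [this]
      linarith

theorem stmt9 :
    StrictMonoOn
      (fun N : ℝ => 2 * Real.arccos (1 / Real.sqrt N) / Real.arccos (1 / N))
      (Set.Ici (2 : ℝ)) := by
  have hmem : ∀ N : ℝ, 2 ≤ N → arccos (1 / Real.sqrt N) ∈ Ico (π/4) (π/2) := by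
    intro N hN
    have hN0 : (0:ℝ) < N := by linarith
    have h1 : (1:ℝ) < Real.sqrt N := by
      rw [(show (1:ℝ) = Real.sqrt 1 from (Real.sqrt_one).symm)]
      exact Real.sqrt_lt_sqrt (by norm_num) (by linarith)
    have hx0 : 0 < 1 / Real.sqrt N := by positivity
    have hx1 : 1 / Real.sqrt N < 1 := by
      rw [div_lt_one (by linarith)]; exact h1
    constructor
    · have hle : 1 / Real.sqrt N ≤ Real.sqrt 2 / 2 := by
        have h2 : Real.sqrt 2 ≤ Real.sqrt N := Real.sqrt_le_sqrt hN
        have h2p : (0:ℝ) < Real.sqrt 2 := Real.sqrt_pos.2 (by norm_num)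
        have h2sq : Real.sqrt 2 ^ 2 = 2 := Real.sq_sqrt (by norm_num)
        rw [div_le_div_iff₀ (by linarith) (by norm_num)]
        nlinarith
      have hm1 : (1 / Real.sqrt N) ∈ Icc (-1:ℝ) 1 := ⟨by linarith, hx1.le⟩
      have hm2 : (Real.sqrt 2 / 2) ∈ Icc (-1:ℝ) 1 := by
        constructor
        · linarith [Real.sqrt_nonneg 2]
        · nlinarith [Real.sq_sqrt (show (0:ℝ) ≤ 2 by norm_num), Real.sqrt_nonneg 2]
      have hanti := Real.strictAntiOn_arccos.antitoneOn hm1 hm2 hle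
      calc π/4 = arccos (Real.sqrt 2 / 2) := by
            rw [← Real.cos_pi_div_four,
              Real.arccos_cos (by positivity) (by linarith [Real.pi_pos])]
        _ ≤ arccos (1 / Real.sqrt N) := hanti
    · exact Real.arccos_lt_pi_div_two.2 hx0
  have heq : ∀ N : ℝ, 2 ≤ N →
      2 * arccos (1 / Real.sqrt N) / arccos (1 / N) = Hfun (arccos (1 / Real.sqrt N)) := by
    intro N hN
    have hN0 : (0:ℝ) < N := by linarith
    have hx1 : 1 / Real.sqrt N ≤ 1 := by
      rw [div_le_one (Real.sqrt_pos.2 hN0)]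
      rw [(show (1:ℝ) = Real.sqrt 1 from (Real.sqrt_one).symm)]
      exact Real.sqrt_le_sqrt (by linarith)
    have hcos : cos (arccos (1 / Real.sqrt N)) = 1 / Real.sqrt N :=
      Real.cos_arccos (by
        have h : (0:ℝ) ≤ 1 / Real.sqrt N := by positivity
        linarith) hx1
    unfold Hfun Afun
    rw [hcos, div_pow, one_pow, Real.sq_sqrt hN0.le]
  intro N1 hN1 N2 hN2 h12
  simp only [Set.mem_Ici] at hN1 hN2
  simp only
  rw [heq N1 hN1, heq N2 hN2]
  apply Hmono (hmem N1 hN1) (hmem N2 hN2)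
  -- arccos (1/√N1) < arccos (1/√N2)
  have h1 : (0:ℝ) < Real.sqrt N1 := Real.sqrt_pos.2 (by linarith)
  have h2 : (0:ℝ) < Real.sqrt N2 := Real.sqrt_pos.2 (by linarith)
  have hlt : 1 / Real.sqrt N2 < 1 / Real.sqrt N1 := by
    apply div_lt_div_of_pos_left one_pos h1
    exact Real.sqrt_lt_sqrt (by linarith) h12
  have hb1 : 1 / Real.sqrt N1 ≤ 1 := by
    rw [div_le_one h1, (show (1:ℝ) = Real.sqrt 1 from (Real.sqrt_one).symm)]
    exact Real.sqrt_le_sqrt (by linarith)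
  have e1 : (0:ℝ) ≤ 1 / Real.sqrt N1 := by positivity
  have e2 : (0:ℝ) ≤ 1 / Real.sqrt N2 := by positivity
  exact Real.strictAntiOn_arccos ⟨by linarith, by linarith⟩
    ⟨by linarith, hb1⟩ hlt
end

section
/- Let H be Hermitian with eigenvalue spread (max eigenvalue minus min eigenvalue) at most 2μ, and let |ψ(t)⟩ = e^{−iHt}|ψ(0)⟩. Then the Fubini–Study angle θ(t) = arccos(|⟨ψ(0)|ψ(t)⟩|) satisfies θ(t) ≤ μt for all t ≥ 0; consequently the minimum time to transform |ψ(0)⟩ into a state at angle θ is at least θ/μ. -/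
open Matrix

theorem stmt14 (d : ℕ) (hd : 0 < d) (μ : ℝ) (hμ : 0 < μ)
    (H : Matrix (Fin d) (Fin d) ℂ) (hH : H.IsHermitian)
    (hspread : (⨆ i, hH.eigenvalues i) - (⨅ i, hH.eigenvalues i) ≤ 2 * μ)
    (ψ₀ : Fin d → ℂ) (hψ₀ : star ψ₀ ⬝ᵥ ψ₀ = 1)
    (ψ : ℝ → (Fin d → ℂ))
    (hψ : ∀ t : ℝ, ψ t = (NormedSpace.exp ((-Complex.I * (t : ℂ)) • H)).mulVec ψ₀) :
    (∀ t : ℝ, 0 ≤ t → Real.arccos (‖star ψ₀ ⬝ᵥ ψ t‖) ≤ μ * t) ∧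
    (∀ t : ℝ, 0 ≤ t → Real.arccos (‖star ψ₀ ⬝ᵥ ψ t‖) / μ ≤ t) := by
  haveI : NeZero d := ⟨hd.ne'⟩
  set lam := hH.eigenvalues with hlam
  set U : Matrix (Fin d) (Fin d) ℂ := (hH.eigenvectorUnitary : Matrix (Fin d) (Fin d) ℂ) with hU
  have hUU : U * star U = 1 := (Matrix.mem_unitaryGroup_iff).mp hH.eigenvectorUnitary.2
  have hUU' : star U * U = 1 := (Matrix.mem_unitaryGroup_iff').mp hH.eigenvectorUnitary.2
  have hUunit : IsUnit U := ⟨⟨U, star U, hUU, hUU'⟩, rfl⟩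
  have hUinv : U⁻¹ = star U := Matrix.inv_eq_right_inv hUU
  set φ : Fin d → ℂ := (star U) *ᵥ ψ₀ with hφ
  set p : Fin d → ℝ := fun j => Complex.normSq (φ j) with hp
  have hpnn : ∀ j, 0 ≤ p j := fun j => Complex.normSq_nonneg _
  have hstarφ : star φ = star ψ₀ ᵥ* U := by
    rw [hφ, star_mulVec, Matrix.star_eq_conjTranspose, conjTranspose_conjTranspose]
  have hφsum : ∑ j, (p j : ℂ) = 1 := by
    have h1 : star φ ⬝ᵥ φ = 1 := by
      rw [hstarφ, hφ, ← dotProduct_mulVec, mulVec_mulVec, hUU, one_mulVec, hψ₀]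
    rw [← h1]
    simp only [dotProduct, Pi.star_apply]
    refine Finset.sum_congr rfl fun j _ => ?_
    rw [hp]
    simp [Complex.normSq_eq_conj_mul_self]
  have hpsum : ∑ j, p j = 1 := by
    have := hφsum
    exact_mod_cast this
  -- inner product formula
  have hinner : ∀ t : ℝ, star ψ₀ ⬝ᵥ ψ t
      = ∑ j, Complex.exp (-Complex.I * t * lam j) * (p j : ℂ) := by
    intro t
    have hexp : NormedSpace.exp ((-Complex.I * (t : ℂ)) • H)
        = U * diagonal (fun j => Complex.exp (-Complex.I * t * lam j)) * star U := by
      conv_lhs => rw [hH.spectral_theorem, Unitary.conjStarAlgAut_apply]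
      rw [← hU, ← hUinv, mul_assoc, ← mul_smul_comm, ← smul_mul_assoc, ← mul_assoc,
        Matrix.exp_conj U _ hUunit, hUinv]
      congr 2
      rw [← diagonal_smul, Matrix.exp_diagonal]
      congr 1
      rw [Pi.exp_def]
      funext j
      rw [← Complex.exp_eq_exp_ℂ]
      simp only [Pi.smul_apply, Function.comp_apply, smul_eq_mul, RCLike.ofReal_alg]
      norm_num
      rfl
    rw [hψ t, hexp, ← mulVec_mulVec, ← mulVec_mulVec, dotProduct_mulVec, ← hstarφ, ← hφ]
    simp only [mulVec_diagonal, dotProduct, Pi.star_apply]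
    refine Finset.sum_congr rfl fun j _ => ?_
    rw [hp]
    push_cast [Complex.normSq_eq_conj_mul_self]
    simp only [Pi.star_apply, Complex.star_def]
    ring
  -- eigenvalue bounds
  set c : ℝ := ((⨆ i, lam i) + (⨅ i, lam i)) / 2 with hc
  have hbdd : ∀ j, |c - lam j| ≤ μ := by
    intro j
    have h1 : lam j ≤ ⨆ i, lam i := le_ciSup (Finite.bddAbove_range _) j
    have h2 : ⨅ i, lam i ≤ lam j := ciInf_le (Finite.bddBelow_range _) j
    rw [abs_le]
    constructor <;> [skip; skip] <;> rw [hc] <;> nlinarith [hspread]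
  -- main bound
  have key : ∀ t : ℝ, 0 ≤ t → Real.arccos (‖star ψ₀ ⬝ᵥ ψ t‖) ≤ μ * t := by
    intro t ht
    by_cases hπ : μ * t ≤ Real.pi
    · -- the rotated inner product
      have habs1 : ‖Complex.exp (Complex.I * c * t)‖ = 1 := by
        rw [Complex.norm_exp]
        simp
      set g : ℂ := Complex.exp (Complex.I * c * t) * (star ψ₀ ⬝ᵥ ψ t) with hg
      have hgabs : ‖g‖ = ‖star ψ₀ ⬝ᵥ ψ t‖ := by
        rw [hg, norm_mul, habs1, one_mul]
      have hgre : g.re = ∑ j, Real.cos ((c - lam j) * t) * p j := by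
        rw [hg, hinner t, Finset.mul_sum]
        rw [Complex.re_sum]
        refine Finset.sum_congr rfl fun j _ => ?_
        rw [← mul_assoc, ← Complex.exp_add]
        have : Complex.I * c * t + -Complex.I * t * lam j
            = (((c - lam j) * t : ℝ) : ℂ) * Complex.I := by
          push_cast
          ring
        rw [this, Complex.mul_re]
        simp only [Complex.ofReal_re, Complex.ofReal_im, mul_zero, sub_zero,
          Complex.exp_ofReal_mul_I_re]
      have hcos : Real.cos (μ * t) ≤ g.re := by
        rw [hgre]
        have : ∀ j ∈ Finset.univ, Real.cos (μ * t) * p j ≤ Real.cos ((c - lam j) * t) * p j := by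
          intro j _
          refine mul_le_mul_of_nonneg_right ?_ (hpnn j)
          have : Real.cos ((c - lam j) * t) = Real.cos (|(c - lam j) * t|) := (Real.cos_abs _).symm
          rw [this]
          refine Real.cos_le_cos_of_nonneg_of_le_pi (abs_nonneg _) hπ ?_
          rw [abs_mul, abs_of_nonneg ht]
          exact mul_le_mul_of_nonneg_right (hbdd j) ht
        calc Real.cos (μ * t) = ∑ j, Real.cos (μ * t) * p j := by
              rw [← Finset.mul_sum, hpsum, mul_one]
          _ ≤ _ := Finset.sum_le_sum this
      have hle : Real.cos (μ * t) ≤ ‖star ψ₀ ⬝ᵥ ψ t‖ := by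
        calc Real.cos (μ * t) ≤ g.re := hcos
          _ ≤ ‖g‖ := Complex.re_le_norm g
          _ = _ := hgabs
      calc Real.arccos (‖star ψ₀ ⬝ᵥ ψ t‖)
          ≤ Real.arccos (Real.cos (μ * t)) := by
            unfold Real.arccos
            have := Real.monotone_arcsin hle
            linarith
        _ = μ * t := Real.arccos_cos (by positivity) hπ
    · calc Real.arccos _ ≤ Real.pi := Real.arccos_le_pi _
        _ ≤ μ * t := le_of_not_ge hπ
  refine ⟨key, fun t ht => ?_⟩
  rw [div_le_iff₀ hμ]
  linarith [key t ht]
end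

section
/- Let N ≥ 2 and suppose a unitary U on ℂ^N ⊗ ℂ^N satisfies U(|n⟩ ⊗ |φ⟩) = |ψ⟩ ⊗ |φ_n⟩ for all n, where {|n⟩} is an orthonormal basis of the first factor, |φ⟩ and |ψ⟩ are unit vectors, and {|φ_n⟩} is an orthonormal family in the second factor. Then min_n |(⟨ψ| ⊗ ⟨φ_n|) (|n⟩ ⊗ |φ⟩)| ≤ 1/N, so by the quantum speed limit such a U generated by a Hamiltonian of spectral spread 2μ requires time at least arccos(1/N)/μ. -/
open Matrix

private lemma cos_min_le' {θ s : ℝ} (h : |θ| ≤ s) :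
    Real.cos (min s Real.pi) ≤ Real.cos θ := by
  rw [← Real.cos_abs θ]
  rcases le_total |θ| Real.pi with h1 | h1
  · exact Real.cos_le_cos_of_nonneg_of_le_pi (abs_nonneg θ) (min_le_right _ _) (le_min h h1)
  · rw [min_eq_right (h1.trans h)]
    simpa using Real.neg_one_le_cos |θ|

private lemma qsl_overlap {n : Type*} [Fintype n] [DecidableEq n] [Nonempty n]
    (H : Matrix n n ℂ) (hH : H.IsHermitian) (μ t : ℝ) (ht : 0 ≤ t)
    (hspread : (⨆ i, hH.eigenvalues i) - (⨅ i, hH.eigenvalues i) ≤ 2 * μ)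
    (x : n → ℂ) (hx : star x ⬝ᵥ x = 1) :
    Real.cos (min (t * μ) Real.pi) ≤
      ‖(star x ⬝ᵥ (NormedSpace.exp ((-Complex.I * (t : ℂ)) • H)) *ᵥ x)‖ := by
  set E := hH.eigenvalues with hE
  set Eb : ℝ := ((⨆ i, E i) + (⨅ i, E i)) / 2 with hEb
  have hEj : ∀ j, |Eb - E j| ≤ μ := by
    intro j
    have hle : E j ≤ ⨆ i, E i := le_ciSup (Set.finite_range E).bddAbove j
    have hge : (⨅ i, E i) ≤ E j := ciInf_le (Set.finite_range E).bddBelow j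
    rw [abs_le]; constructor <;> [skip; skip] <;> simp only [hEb] <;> nlinarith [hspread]
  set V : Matrix n n ℂ := (hH.eigenvectorUnitary : Matrix n n ℂ) with hV
  have hV1 : V * star V = 1 := (Matrix.mem_unitaryGroup_iff).mp hH.eigenvectorUnitary.2
  have hV2 : star V * V = 1 := (Matrix.mem_unitaryGroup_iff').mp hH.eigenvectorUnitary.2
  set Vu : (Matrix n n ℂ)ˣ := ⟨V, star V, hV1, hV2⟩ with hVu
  have key : NormedSpace.exp ((-Complex.I * (t : ℂ)) • H)
      = V * Matrix.diagonal (fun j => Complex.exp (-Complex.I * t * (E j : ℂ))) * star V := by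
    have h0 : (-Complex.I * (t : ℂ)) • H
        = V * Matrix.diagonal (fun j => -Complex.I * t * (E j : ℂ)) * star V := by
      have hd : ((-Complex.I * (t : ℂ)) • (RCLike.ofReal ∘ E) : n → ℂ)
          = fun j => -Complex.I * t * (E j : ℂ) := by
        funext j; simp [Function.comp, smul_eq_mul]
      conv_lhs => rw [hH.spectral_theorem, Unitary.conjStarAlgAut_apply, ← Unitary.coe_star]
      rw [← hV, ← Matrix.smul_mul, ← Matrix.mul_smul, ← Matrix.diagonal_smul, hd]
      rfl
    rw [h0]
    rw [show V * Matrix.diagonal (fun j => -Complex.I * t * (E j : ℂ)) * star V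
        = (Vu : Matrix n n ℂ) * Matrix.diagonal (fun j => -Complex.I * t * (E j : ℂ))
          * ((Vu⁻¹ : (Matrix n n ℂ)ˣ) : Matrix n n ℂ) from rfl,
      Matrix.exp_units_conj Vu, Matrix.exp_diagonal, Pi.exp_def]
    simp only [← Complex.exp_eq_exp_ℂ]
    rfl
  set c : n → ℂ := star V *ᵥ x with hc
  have hstar : star x ᵥ* V = star c := by
    rw [hc, Matrix.star_mulVec]
    simp [Matrix.star_eq_conjTranspose]
  have hnorm : star c ⬝ᵥ c = 1 := by
    rw [← hstar, hc, Matrix.dotProduct_mulVec, Matrix.vecMul_vecMul, hV1,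
      Matrix.vecMul_one, hx]
  have hsum1 : ∑ j, Complex.normSq (c j) = 1 := by
    have h2 : ((∑ j, Complex.normSq (c j) : ℝ) : ℂ) = 1 := by
      push_cast
      rw [← hnorm]
      simp only [dotProduct, Pi.star_apply, RCLike.star_def]
      exact Finset.sum_congr rfl fun j _ => Complex.normSq_eq_conj_mul_self
    exact_mod_cast h2
  have hov : star x ⬝ᵥ (NormedSpace.exp ((-Complex.I * (t : ℂ)) • H)) *ᵥ x
      = ∑ j, Complex.exp (-Complex.I * t * (E j : ℂ)) * (Complex.normSq (c j) : ℂ) := by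
    rw [key, ← Matrix.mulVec_mulVec, ← Matrix.mulVec_mulVec, Matrix.dotProduct_mulVec, hstar,
      ← hc]
    simp only [dotProduct, Pi.star_apply, RCLike.star_def, Matrix.mulVec_diagonal]
    refine Finset.sum_congr rfl fun j _ => ?_
    rw [Complex.normSq_eq_conj_mul_self]
    ring
  set z : ℂ := star x ⬝ᵥ (NormedSpace.exp ((-Complex.I * (t : ℂ)) • H)) *ᵥ x with hz
  have habs : ‖(Complex.exp (Complex.I * t * Eb) * z)‖ = ‖z‖ := by
    rw [norm_mul, Complex.norm_exp]
    norm_num [Complex.mul_re, Complex.mul_im]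
  have hre : Real.cos (min (t * μ) Real.pi) ≤ (Complex.exp (Complex.I * t * Eb) * z).re := by
    rw [hov, Finset.mul_sum]
    have hterm : ∀ j, Complex.exp (Complex.I * t * Eb) *
          (Complex.exp (-Complex.I * t * (E j : ℂ)) * (Complex.normSq (c j) : ℂ))
        = Complex.exp (((t * (Eb - E j) : ℝ) : ℂ) * Complex.I) * (Complex.normSq (c j) : ℂ) := by
      intro j
      rw [← mul_assoc, ← Complex.exp_add]
      congr 2
      push_cast
      ring
    simp only [hterm]
    rw [Complex.re_sum]
    have hterm2 : ∀ j, (Complex.exp (((t * (Eb - E j) : ℝ) : ℂ) * Complex.I)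
          * (Complex.normSq (c j) : ℂ)).re
        = Real.cos (t * (Eb - E j)) * Complex.normSq (c j) := by
      intro j
      rw [Complex.mul_re, Complex.ofReal_re, Complex.ofReal_im, mul_zero, sub_zero,
        Complex.exp_ofReal_mul_I_re]
    simp only [hterm2]
    calc Real.cos (min (t * μ) Real.pi)
        = ∑ j, Real.cos (min (t * μ) Real.pi) * Complex.normSq (c j) := by
          rw [← Finset.mul_sum, hsum1, mul_one]
      _ ≤ ∑ j, Real.cos (t * (Eb - E j)) * Complex.normSq (c j) := by
          refine Finset.sum_le_sum fun j _ => ?_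
          refine mul_le_mul_of_nonneg_right ?_ (Complex.normSq_nonneg _)
          refine cos_min_le' ?_
          rw [abs_mul, abs_of_nonneg ht]
          exact mul_le_mul_of_nonneg_left (hEj j) ht
  calc Real.cos (min (t * μ) Real.pi) ≤ (Complex.exp (Complex.I * t * Eb) * z).re := hre
    _ ≤ ‖(Complex.exp (Complex.I * t * Eb) * z)‖ := Complex.re_le_norm _
    _ = ‖z‖ := habs

private lemma exists_small' (N : ℕ) (hN : 2 ≤ N) (a b : Fin N → ℝ)
    (ha : ∑ i, a i ^ 2 = 1) (hb : ∑ i, b i ^ 2 = 1)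
    (ha0 : ∀ i, 0 ≤ a i) (hb0 : ∀ i, 0 ≤ b i) :
    ∃ i, a i * b i ≤ 1 / N := by
  by_contra hcon
  push_neg at hcon
  have hNpos : (0:ℝ) < N := by positivity
  have h1 : (1:ℝ) < ∑ i, a i * b i := by
    have h2 : ∑ _i : Fin N, (1:ℝ)/N < ∑ i, a i * b i :=
      Finset.sum_lt_sum_of_nonempty ⟨⟨0, by omega⟩, Finset.mem_univ _⟩ (fun i _ => hcon i)
    rw [Finset.sum_const, Finset.card_univ, Fintype.card_fin, nsmul_eq_mul] at h2
    rw [mul_one_div, div_self (ne_of_gt hNpos)] at h2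
    exact h2
  have h2 : (∑ i, a i * b i) ^ 2 ≤ 1 := by
    have := Finset.sum_mul_sq_le_sq_mul_sq Finset.univ a b
    rw [ha, hb] at this; simpa using this
  nlinarith

theorem stmt17 (N : ℕ) (hN : 2 ≤ N) (μ : ℝ) (hμ : 0 < μ)
    (ψ φ : Fin N → ℂ) (hψ : star ψ ⬝ᵥ ψ = 1) (hφ : star φ ⬝ᵥ φ = 1)
    (φn : Fin N → (Fin N → ℂ))
    (hφn : ∀ m n : Fin N, star (φn m) ⬝ᵥ φn n = if m = n then 1 else 0)
    (U : (Fin N × Fin N → ℂ) ≃ₗ[ℂ] (Fin N × Fin N → ℂ))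
    (hUiso : ∀ x y : Fin N × Fin N → ℂ, star (U x) ⬝ᵥ U y = star x ⬝ᵥ y)
    (hU : ∀ n : Fin N,
      U (fun p => (Pi.single n (1 : ℂ) : Fin N → ℂ) p.1 * φ p.2) =
        fun p => ψ p.1 * φn n p.2) :
    (∃ n : Fin N,
      ‖(star (fun p : Fin N × Fin N => ψ p.1 * φn n p.2) ⬝ᵥ
          (fun p : Fin N × Fin N => (Pi.single n (1 : ℂ) : Fin N → ℂ) p.1 * φ p.2))‖ ≤
        1 / N) ∧
    ∀ (H : Matrix (Fin N × Fin N) (Fin N × Fin N) ℂ) (hH : H.IsHermitian),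
      (⨆ i, hH.eigenvalues i) - (⨅ i, hH.eigenvalues i) ≤ 2 * μ →
      ∀ t : ℝ, 0 ≤ t →
        (∀ n : Fin N,
          (NormedSpace.exp ((-Complex.I * (t : ℂ)) • H)).mulVec
              (fun p => (Pi.single n (1 : ℂ) : Fin N → ℂ) p.1 * φ p.2) =
            fun p => ψ p.1 * φn n p.2) →
        Real.arccos (1 / N) / μ ≤ t := by
  have tensor_dot : ∀ (u v w y : Fin N → ℂ),
      star (fun p : Fin N × Fin N => u p.1 * v p.2) ⬝ᵥ (fun p : Fin N × Fin N => w p.1 * y p.2)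
        = (star u ⬝ᵥ w) * (star v ⬝ᵥ y) := by
    intro u v w y
    simp only [dotProduct, Pi.star_apply, Fintype.sum_prod_type, Finset.sum_mul_sum]
    refine Finset.sum_congr rfl fun i _ => Finset.sum_congr rfl fun j _ => ?_
    simp only [star_mul']
    ring
  have dot_conj : ∀ (u v : Fin N → ℂ), star (star u ⬝ᵥ v) = star v ⬝ᵥ u := by
    intro u v
    simp only [dotProduct, star_sum, Pi.star_apply, star_mul', star_star]
    exact Finset.sum_congr rfl fun i _ => by ring
  set b : Fin N → ℂ := fun i => star (φn i) ⬝ᵥ φ with hbdef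
  -- norms
  have habs_sq : ∀ (v : Fin N → ℂ), star v ⬝ᵥ v = 1 → ∑ i, ‖v i‖ ^ 2 = 1 := by
    intro v hv
    have h2 : ((∑ i, ‖v i‖ ^ 2 : ℝ) : ℂ) = 1 := by
      push_cast
      rw [← hv]
      simp only [dotProduct, Pi.star_apply, RCLike.star_def]
      refine Finset.sum_congr rfl fun i _ => ?_
      rw [← Complex.normSq_eq_conj_mul_self, ← Complex.sq_norm]
      norm_cast
    exact_mod_cast h2
  have hψsum : ∑ i, ‖ψ i‖ ^ 2 = 1 := habs_sq ψ hψ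
  have hbsum : ∑ i, ‖b i‖ ^ 2 = 1 := by
    refine habs_sq b ?_
    set M : Matrix (Fin N) (Fin N) ℂ := Matrix.of (fun i j => star (φn i j)) with hMdef
    have hb : b = M *ᵥ φ := by
      funext i
      simp [hbdef, hMdef, Matrix.mulVec, dotProduct]
    have hM : M * M.conjTranspose = 1 := by
      ext i j
      rw [Matrix.mul_apply, Matrix.one_apply]
      have h := hφn i j
      rw [dotProduct] at h
      simpa [hMdef, Matrix.conjTranspose_apply] using h
    have hM2 : M.conjTranspose * M = 1 := mul_eq_one_comm.mp hM
    rw [hb, Matrix.star_mulVec, Matrix.dotProduct_mulVec, Matrix.vecMul_vecMul, hM2,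
      Matrix.vecMul_one, hφ]
  obtain ⟨n, hn⟩ := exists_small' N hN (fun i => ‖ψ i‖) (fun i => ‖b i‖)
    hψsum hbsum (fun i => norm_nonneg _) (fun i => norm_nonneg _)
  have hNpos : (0:ℝ) < N := by positivity
  constructor
  · refine ⟨n, ?_⟩
    rw [tensor_dot]
    rw [norm_mul]
    have h1 : star ψ ⬝ᵥ (Pi.single n (1:ℂ)) = star (ψ n) := by
      simp [dotProduct, Pi.single_apply]
    rw [h1]
    simpa using hn
  · intro H hH hsp t ht hexp
    set x : Fin N × Fin N → ℂ := fun p => (Pi.single n (1 : ℂ) : Fin N → ℂ) p.1 * φ p.2 with hxdef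
    have hx : star x ⬝ᵥ x = 1 := by
      rw [hxdef, tensor_dot, hφ]
      simp [dotProduct, Pi.single_apply]
    haveI : Nonempty (Fin N) := ⟨⟨0, by omega⟩⟩
    have hcos := qsl_overlap H hH μ t ht hsp x hx
    rw [show (NormedSpace.exp ((-Complex.I * (t : ℂ)) • H)) *ᵥ x
        = fun p => ψ p.1 * φn n p.2 from hexp n] at hcos
    have hover : ‖(star x ⬝ᵥ (fun p : Fin N × Fin N => ψ p.1 * φn n p.2))‖ ≤ 1 / N := by
      rw [hxdef, tensor_dot, norm_mul]
      have h1 : star (Pi.single n (1:ℂ)) ⬝ᵥ ψ = ψ n := by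
        simp [dotProduct, Pi.single_apply]
      have h2 : star φ ⬝ᵥ φn n = star (b n) := (dot_conj (φn n) φ).symm
      rw [h1, h2]
      simpa using hn
    have hcos2 : Real.cos (min (t * μ) Real.pi) ≤ 1 / N := hcos.trans hover
    have hN1 : (1:ℝ)/N ≤ 1 := by
      rw [div_le_one hNpos]
      exact_mod_cast Nat.one_le_of_lt hN
    have hNm1 : (-1:ℝ) ≤ 1/N := by
      have h0 : (0:ℝ) ≤ 1/N := by positivity
      linarith
    have harc : Real.arccos (1/N) ≤ t * μ := by
      rcases le_or_gt Real.pi (t * μ) with hp | hp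
      · exact (Real.arccos_le_pi _).trans hp
      · rw [min_eq_left hp.le] at hcos2
        by_contra hcon
        push_neg at hcon
        have hmono := Real.strictAntiOn_cos
          (Set.mem_Icc.mpr ⟨mul_nonneg ht hμ.le, hp.le⟩)
          (Set.mem_Icc.mpr ⟨Real.arccos_nonneg _, Real.arccos_le_pi _⟩) hcon
        rw [Real.cos_arccos hNm1 hN1] at hmono
        linarith
    rw [div_le_iff₀ hμ]
    exact harc
end
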